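/- For all fixed integers r ≥ 2 and l ≥ 2 there exist a real ε > 0 and n₀ ∈ ℕ such that the following holds: if G is a simple graph on n ≥ n₀ vertices that contains no subgraph isomorphic to the complete r-partite graph K_{l,…,l} with all r parts of size l (i.e., there are no r pairwise disjoint l-element vertex sets with all cross pairs adjacent), then the number of r-cliques of G is at most n^{r−ε}. -/

import Mathlib

open Finset

private lemma natCast_sub_bound (a b : ℕ) : (a : ℝ) - b ≤ ((a + 1 - b : ℕ) : ℝ) := by
  rcases le_or_gt b a with h | h
  · rw [Nat.cast_sub (by omega)]
    push_cast
    linarith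
  · have hb : (a : ℝ) ≤ b := by exact_mod_cast h.le
    have : (0:ℝ) ≤ ((a + 1 - b : ℕ) : ℝ) := by positivity
    linarith

/-- The "box" (complete multipartite) configuration in a set system. -/
def HasBox {V : Type} [Fintype V] [DecidableEq V] (H : Finset (Finset V)) (r l : ℕ) : Prop :=
  ∃ A : Fin r → Finset V,
    (∀ i, (A i).card = l) ∧
    (∀ i j, i ≠ j → Disjoint (A i) (A j)) ∧
    (∀ g : Fin r → V, (∀ i, g i ∈ A i) → Finset.image g Finset.univ ∈ H)

private lemma countA {V : Type} [Fintype V] [DecidableEq V] (H : Finset (Finset V)) (r : ℕ)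
    (hunif : ∀ S ∈ H, S.card = r + 1) :
    ∑ T ∈ powersetCard r (univ : Finset V),
      (univ.filter (fun v => v ∉ T ∧ insert v T ∈ H)).card = (r + 1) * H.card := by
  classical
  set Q : Finset (Finset V × V) :=
    (univ ×ˢ univ).filter (fun p => p.1.card = r ∧ p.2 ∉ p.1 ∧ insert p.2 p.1 ∈ H) with hQdef
  have h1 : Q.card = ∑ T ∈ powersetCard r (univ : Finset V),
      (univ.filter (fun v => v ∉ T ∧ insert v T ∈ H)).card := by
    rw [card_eq_sum_card_fiberwise (f := Prod.fst) (t := powersetCard r (univ : Finset V))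
      (fun p hp => by
        simp only [hQdef, Finset.mem_coe, mem_filter] at hp
        exact mem_powersetCard_univ.2 hp.2.1)]
    refine Finset.sum_congr rfl fun T hT => ?_
    have hTc : T.card = r := mem_powersetCard_univ.1 hT
    have : Q.filter (fun p => p.1 = T)
        = {T} ×ˢ (univ.filter (fun v => v ∉ T ∧ insert v T ∈ H)) := by
      ext ⟨a, v⟩
      simp only [hQdef, mem_filter, mem_product, mem_univ, true_and, mem_singleton]
      constructor
      · rintro ⟨⟨_, h2, h3⟩, rfl⟩
        exact ⟨rfl, h2, h3⟩
      · rintro ⟨rfl, h2, h3⟩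
        exact ⟨⟨hTc, h2, h3⟩, rfl⟩
    rw [this, card_product, card_singleton, one_mul]
  have h2 : Q.card = (r + 1) * H.card := by
    rw [card_eq_sum_card_fiberwise (f := fun p => insert p.2 p.1) (t := H)
      (fun p hp => by
        simp only [hQdef, Finset.mem_coe, mem_filter] at hp
        exact hp.2.2.2)]
    rw [Finset.sum_congr rfl (fun S hS => ?_), Finset.sum_const, smul_eq_mul, mul_comm]
    have hScard : S.card = r + 1 := hunif S hS
    have : Q.filter (fun p => insert p.2 p.1 = S) = S.image (fun v => (S.erase v, v)) := by
      ext ⟨a, v⟩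
      simp only [hQdef, mem_filter, mem_product, mem_univ, true_and, mem_image, Prod.mk.injEq]
      constructor
      · rintro ⟨⟨h1', h2', h3'⟩, h4'⟩
        refine ⟨v, ?_, ?_, rfl⟩
        · rw [← h4']; exact mem_insert_self _ _
        · rw [← h4', Finset.erase_insert h2']
      · rintro ⟨w, hw, rfl, rfl⟩
        refine ⟨⟨?_, notMem_erase _ _, ?_⟩, Finset.insert_erase hw⟩
        · simp [Finset.card_erase_of_mem hw, hScard]
        · rw [Finset.insert_erase hw]; exact hS
    rw [this, Finset.card_image_of_injective _ (fun x y hxy => (Prod.mk.injEq _ _ _ _ ▸ hxy).2),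
      hScard]
  omega

private lemma countB {V : Type} [Fintype V] [DecidableEq V] (H : Finset (Finset V)) (r l : ℕ) :
    ∑ L ∈ powersetCard l (univ : Finset V),
      (univ.filter (fun T : Finset V => T.card = r ∧ ∀ v ∈ L, v ∉ T ∧ insert v T ∈ H)).card
    = ∑ T ∈ powersetCard r (univ : Finset V),
        ((univ.filter (fun v => v ∉ T ∧ insert v T ∈ H)).card).choose l := by
  classical
  set R : Finset (Finset V × Finset V) :=
    (univ ×ˢ univ).filter
      (fun p => p.1.card = l ∧ p.2.card = r ∧ ∀ v ∈ p.1, v ∉ p.2 ∧ insert v p.2 ∈ H) with hRdef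
  have h1 : R.card = ∑ L ∈ powersetCard l (univ : Finset V),
      (univ.filter (fun T : Finset V => T.card = r ∧ ∀ v ∈ L, v ∉ T ∧ insert v T ∈ H)).card := by
    rw [card_eq_sum_card_fiberwise (f := Prod.fst) (t := powersetCard l (univ : Finset V))
      (fun p hp => by
        simp only [hRdef, Finset.mem_coe, mem_filter] at hp
        exact mem_powersetCard_univ.2 hp.2.1)]
    refine Finset.sum_congr rfl fun L hL => ?_
    have hLc : L.card = l := mem_powersetCard_univ.1 hL
    have : R.filter (fun p => p.1 = L) =
        (univ.filter (fun T : Finset V => T.card = r ∧ ∀ v ∈ L, v ∉ T ∧ insert v T ∈ H)).image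
          (fun T => (L, T)) := by
      ext ⟨a, b⟩
      simp only [hRdef, mem_filter, mem_product, mem_univ, true_and, mem_image, Prod.mk.injEq]
      constructor
      · rintro ⟨⟨h1', h2', h3'⟩, rfl⟩
        exact ⟨b, ⟨h2', h3'⟩, rfl, rfl⟩
      · rintro ⟨T, ⟨h2', h3'⟩, rfl, rfl⟩
        exact ⟨⟨hLc, h2', h3'⟩, rfl⟩
    rw [this, Finset.card_image_of_injective _ (fun x y hxy => (Prod.mk.injEq _ _ _ _ ▸ hxy).2)]
  have h2 : R.card = ∑ T ∈ powersetCard r (univ : Finset V),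
      ((univ.filter (fun v => v ∉ T ∧ insert v T ∈ H)).card).choose l := by
    rw [card_eq_sum_card_fiberwise (f := Prod.snd) (t := powersetCard r (univ : Finset V))
      (fun p hp => by
        simp only [hRdef, Finset.mem_coe, mem_filter] at hp
        exact mem_powersetCard_univ.2 hp.2.2.1)]
    refine Finset.sum_congr rfl fun T hT => ?_
    have hTc : T.card = r := mem_powersetCard_univ.1 hT
    have : R.filter (fun p => p.2 = T) =
        (powersetCard l (univ.filter (fun v => v ∉ T ∧ insert v T ∈ H))).image
          (fun L => (L, T)) := by
      ext ⟨a, b⟩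
      simp only [hRdef, mem_filter, mem_product, mem_univ, true_and, mem_image, Prod.mk.injEq,
        mem_powersetCard]
      constructor
      · rintro ⟨⟨h1', h2', h3'⟩, rfl⟩
        refine ⟨a, ⟨fun v hv => ?_, h1'⟩, rfl, rfl⟩
        · simp only [mem_filter, mem_univ, true_and]
          exact h3' v hv
      · rintro ⟨L, ⟨hsub, hcard⟩, rfl, rfl⟩
        refine ⟨⟨hcard, hTc, fun v hv => ?_⟩, rfl⟩
        have := hsub hv
        simp only [mem_filter, mem_univ, true_and] at this
        exact this
    rw [this, Finset.card_image_of_injective _ (fun x y hxy => (Prod.mk.injEq _ _ _ _ ▸ hxy).1),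
      card_powersetCard]
  omega

theorem box_theorem (l : ℕ) (hl : 2 ≤ l) (r : ℕ) :
    ∃ ε : ℝ, 0 < ε ∧ ε ≤ 1 ∧ ∃ n₀ : ℕ, 2 ≤ n₀ ∧
      ∀ (V : Type) [Fintype V] [DecidableEq V] (H : Finset (Finset V)),
        n₀ ≤ Fintype.card V →
        (∀ S ∈ H, S.card = r) →
        ¬ HasBox H r l →
        (H.card : ℝ) ≤ (Fintype.card V : ℝ) ^ ((r : ℝ) - ε) := by
  induction r with
  | zero =>
    refine ⟨1, one_pos, le_refl 1, 2, le_refl 2, fun V _ _ H hn hunif hnoK => ?_⟩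
    have hpos : (0:ℝ) < (Fintype.card V : ℝ) := by
      have : (2:ℝ) ≤ (Fintype.card V : ℝ) := by exact_mod_cast hn
      linarith
    have hH : H = ∅ := by
      by_contra h
      obtain ⟨S, hS⟩ := Finset.nonempty_iff_ne_empty.2 h
      have hS0 : S = ∅ := Finset.card_eq_zero.1 (hunif S hS)
      apply hnoK
      refine ⟨Fin.elim0, fun i => i.elim0, fun i j _ => i.elim0, fun g _ => ?_⟩
      have himg : Finset.image g Finset.univ = ∅ := by simp
      rw [himg, ← hS0]
      exact hS
    rw [hH]
    simp only [Finset.card_empty, Nat.cast_zero]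
    positivity
  | succ r ih =>
    obtain ⟨ε', hε'pos, hε'le, n₀', hn₀'2, IH⟩ := ih
    have hl0 : 0 < l := by omega
    have hlR : (2:ℝ) ≤ (l:ℝ) := by exact_mod_cast hl
    set ε : ℝ := ε' / (2 * l) with hεdef
    have hεpos : 0 < ε := by positivity
    have hεle : ε ≤ 1 := by
      rw [hεdef, div_le_one (by positivity)]
      nlinarith
    have hεhalf : ε ≤ 1/2 := by
      rw [hεdef, div_le_div_iff₀ (by positivity) (by norm_num)]
      nlinarith
    clear_value ε
    obtain ⟨n₁, hn₁⟩ := Filter.eventually_atTop.mp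
      (((tendsto_rpow_atTop (by positivity : (0:ℝ) < ε'/2)).comp
        tendsto_natCast_atTop_atTop).eventually_ge_atTop ((2:ℝ)^l * (Nat.factorial l : ℝ)))
    refine ⟨ε, hεpos, hεle, max (max n₀' ((2*l)*(2*l))) (max n₁ 2),
      (le_max_right n₁ 2).trans (le_max_right _ _), ?_⟩
    intro V _ _ H hn hunif hnoK
    classical
    set n := Fintype.card V with hndef
    have hn2 : 2 ≤ n := le_trans ((le_max_right n₁ 2).trans (le_max_right _ _)) hn
    have hnn₀' : n₀' ≤ n := le_trans ((le_max_left _ _).trans (le_max_left _ _)) hn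
    have hnl2 : (2*l)*(2*l) ≤ n := le_trans ((le_max_right _ _).trans (le_max_left _ _)) hn
    have hnn₁ : n₁ ≤ n := le_trans ((le_max_left _ _).trans (le_max_right _ _)) hn
    set nR : ℝ := (n : ℝ) with hnRdef
    clear_value n
    clear_value nR
    have hnR0 : (0:ℝ) < nR := by
      rw [hnRdef]
      exact_mod_cast (by omega : 0 < n)
    have hnR1 : (1:ℝ) < nR := by rw [hnRdef]; exact_mod_cast hn2
    by_contra hcon
    push_neg at hcon
    push_cast at hcon
    -- hcon : nR ^ ((r:ℝ) + 1 - ε) < H.card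
    set X : ℝ := (H.card : ℝ) with hXdef
    clear_value X
    have hXpos : (0:ℝ) < X := lt_of_le_of_lt (Real.rpow_nonneg hnR0.le _) hcon
    obtain ⟨d, hd⟩ : ∃ d : Finset V → ℕ,
        ∀ T : Finset V, d T = (univ.filter (fun v => v ∉ T ∧ insert v T ∈ H)).card :=
      ⟨_, fun _ => rfl⟩
    obtain ⟨lk, hlk⟩ : ∃ lk : Finset V → Finset (Finset V), ∀ L : Finset V,
        lk L = univ.filter (fun T : Finset V => T.card = r ∧ ∀ v ∈ L, v ∉ T ∧ insert v T ∈ H) :=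
      ⟨_, fun _ => rfl⟩
    have hA : ∑ T ∈ powersetCard r (univ : Finset V), d T = (r+1) * H.card := by
      simp_rw [hd]; exact countA H r hunif
    have hB : ∑ L ∈ powersetCard l (univ : Finset V), (lk L).card
        = ∑ T ∈ powersetCard r (univ : Finset V), (d T).choose l := by
      simp_rw [hd, hlk]; exact countB H r l
    -- the links are box-free, so the induction hypothesis applies
    have hlink : ∀ L ∈ powersetCard l (univ : Finset V),
        ((lk L).card : ℝ) ≤ nR ^ ((r:ℝ) - ε') := by
      intro L hL
      have hLc : L.card = l := mem_powersetCard_univ.1 hL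
      rw [hnRdef, hndef]
      refine IH V (lk L) (hndef ▸ hnn₀') (fun T hT => ?_) ?_
      · rw [hlk] at hT; exact (mem_filter.1 hT).2.1
      · rintro ⟨A, hAcard, hAdisj, hAtrans⟩
        have hAne : ∀ i, (A i).Nonempty := fun i => card_pos.1 (by rw [hAcard i]; omega)
        have hLdisj : ∀ i, Disjoint L (A i) := by
          intro i
          rw [Finset.disjoint_left]
          intro a haL haA
          set g : Fin r → V := fun k => if k = i then a else (hAne k).choose with hgdef
          have hg : ∀ k, g k ∈ A k := by
            intro k
            by_cases hk : k = i
            · subst hk; simpa [hgdef] using haA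
            · simpa [hgdef, hk] using (hAne k).choose_spec
          have hT := hAtrans g hg
          rw [hlk, mem_filter] at hT
          exact (hT.2.2 a haL).1 (Finset.mem_image.2 ⟨i, Finset.mem_univ i, by simp [hgdef]⟩)
        apply hnoK
        refine ⟨Fin.cases L A, ?_, ?_, ?_⟩
        · intro i
          refine Fin.cases ?_ ?_ i
          · simpa using hLc
          · intro j; simpa using hAcard j
        · intro i j hij
          rcases Fin.eq_zero_or_eq_succ i with rfl | ⟨i', rfl⟩ <;>
            rcases Fin.eq_zero_or_eq_succ j with rfl | ⟨j', rfl⟩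
          · exact absurd rfl hij
          · simpa using hLdisj j'
          · simpa using (hLdisj i').symm
          · have hij' : i' ≠ j' := fun h => hij (by rw [h])
            simpa using hAdisj i' j' hij'
        · intro g hg
          have hg' : ∀ i : Fin r, (g ∘ Fin.succ) i ∈ A i := by
            intro i
            have := hg i.succ
            simpa using this
          have hT := hAtrans (g ∘ Fin.succ) hg'
          rw [hlk, mem_filter] at hT
          have hg0 : g 0 ∈ L := by simpa using hg 0
          have himg : Finset.image g Finset.univ
              = insert (g 0) (Finset.image (g ∘ Fin.succ) Finset.univ) := by
            ext v
            simp only [Finset.mem_image, Finset.mem_insert, Finset.mem_univ, true_and,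
              Function.comp_apply]
            constructor
            · rintro ⟨i, rfl⟩
              rcases Fin.eq_zero_or_eq_succ i with rfl | ⟨j, rfl⟩
              · exact Or.inl rfl
              · exact Or.inr ⟨j, rfl⟩
            · rintro (rfl | ⟨j, rfl⟩)
              · exact ⟨0, rfl⟩
              · exact ⟨j.succ, rfl⟩
          rw [himg]
          exact (hT.2.2 (g 0) hg0).2
    -- basic size bounds
    have h𝒯 : ((powersetCard r (univ : Finset V)).card : ℝ) ≤ nR ^ ((r:ℝ)) := by
      rw [hnRdef, Real.rpow_natCast, card_powersetCard, card_univ, ← hndef]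
      exact_mod_cast Nat.choose_le_pow n r
    have h𝒫 : ((powersetCard l (univ : Finset V)).card : ℝ) ≤ nR ^ ((l:ℝ)) := by
      rw [hnRdef, Real.rpow_natCast, card_powersetCard, card_univ, ← hndef]
      exact_mod_cast Nat.choose_le_pow n l
    -- X is big:  2 l n^r ≤ X
    have h2l : (2*(l:ℝ)) ≤ nR ^ ((1:ℝ)/2) := by
      have hcast : (((2*l)*(2*l) : ℕ) : ℝ) ≤ (n:ℝ) := Nat.cast_le.mpr hnl2
      have h1 : ((2*(l:ℝ))^(2:ℕ)) ≤ nR := by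
        rw [hnRdef]
        calc ((2*(l:ℝ))^(2:ℕ)) = (((2*l)*(2*l) : ℕ) : ℝ) := by push_cast; ring
          _ ≤ (n:ℝ) := hcast
      calc (2*(l:ℝ)) = (((2*(l:ℝ))^(2:ℕ)) : ℝ) ^ ((1:ℝ)/2) := by
            rw [← Real.rpow_natCast (2*(l:ℝ)) 2, ← Real.rpow_mul (by positivity)]
            norm_num
        _ ≤ nR ^ ((1:ℝ)/2) := Real.rpow_le_rpow (by positivity) h1 (by norm_num)
    have hXl : 2*(l:ℝ) * nR ^ ((r:ℝ)) ≤ X := by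
      calc 2*(l:ℝ) * nR ^ ((r:ℝ)) = nR ^ ((r:ℝ)) * (2*(l:ℝ)) := by ring
        _ ≤ nR ^ ((r:ℝ)) * nR ^ ((1:ℝ)/2) :=
            mul_le_mul_of_nonneg_left h2l (Real.rpow_nonneg hnR0.le _)
        _ = nR ^ ((r:ℝ) + (1:ℝ)/2) := (Real.rpow_add hnR0 _ _).symm
        _ ≤ nR ^ ((r:ℝ) + 1 - ε) := by
            apply (Real.rpow_le_rpow_left_iff hnR1).mpr
            linarith
        _ ≤ X := hcon.le
    -- lower bound the deficiency sums
    have h5a : X/2 ≤ ∑ T ∈ powersetCard r (univ : Finset V), ((d T + 1 - l : ℕ) : ℝ) := by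
      have s2 : ∑ T ∈ powersetCard r (univ : Finset V), ((d T : ℝ) - (l:ℝ))
          ≤ ∑ T ∈ powersetCard r (univ : Finset V), ((d T + 1 - l : ℕ) : ℝ) :=
        Finset.sum_le_sum (fun T _ => natCast_sub_bound _ _)
      rw [Finset.sum_sub_distrib, Finset.sum_const, nsmul_eq_mul] at s2
      have s3 : ∑ T ∈ powersetCard r (univ : Finset V), ((d T : ℝ)) = ((r:ℝ)+1) * X := by
        rw [hXdef]
        exact_mod_cast hA
      have s4 : ((powersetCard r (univ : Finset V)).card : ℝ) * (l:ℝ) ≤ nR ^ ((r:ℝ)) * l := by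
        apply mul_le_mul_of_nonneg_right h𝒯 (by positivity)
      have s5 : X ≤ ((r:ℝ)+1) * X := by nlinarith
      rw [s3] at s2
      nlinarith
    -- Jensen
    have hTpos : (0:ℝ) < ((powersetCard r (univ : Finset V)).card : ℝ) := by
      have hHpos : 0 < H.card := by
        have h := hXpos
        rw [hXdef] at h
        exact_mod_cast h
      obtain ⟨S, hS⟩ := Finset.card_pos.1 hHpos
      have : r + 1 ≤ n := by
        rw [← hunif S hS, hndef]
        exact Finset.card_le_univ S
      rw [card_powersetCard, card_univ, ← hndef]
      exact_mod_cast Nat.choose_pos (by omega : r ≤ n)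
    have h5b : (X/2)^l / ((powersetCard r (univ : Finset V)).card : ℝ)^(l-1)
        ≤ ∑ T ∈ powersetCard r (univ : Finset V), ((d T + 1 - l : ℕ) : ℝ)^l := by
      have hj := pow_sum_div_card_le_sum_pow
        (s := powersetCard r (univ : Finset V))
        (f := fun T => ((d T + 1 - l : ℕ) : ℝ)) (fun T _ => by positivity) (l-1)
      have hl1 : l - 1 + 1 = l := by omega
      rw [hl1] at hj
      refine le_trans ?_ hj
      gcongr
    have hfacpos : (0:ℝ) < (Nat.factorial l : ℝ) := by exact_mod_cast Nat.factorial_pos l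
    have h5c : ∑ T ∈ powersetCard r (univ : Finset V), ((d T + 1 - l : ℕ) : ℝ)^l
        ≤ (Nat.factorial l : ℝ) * ∑ T ∈ powersetCard r (univ : Finset V), ((d T).choose l : ℝ) := by
      rw [Finset.mul_sum]
      refine Finset.sum_le_sum (fun T _ => ?_)
      have := Nat.pow_le_choose (α := ℝ) l (d T)
      rw [div_le_iff₀ hfacpos] at this
      calc ((d T + 1 - l : ℕ) : ℝ)^l = (((d T + 1 - l : ℕ)^l : ℕ) : ℝ) := by push_cast; ring
        _ ≤ ((d T).choose l : ℝ) * (Nat.factorial l : ℝ) := by exact_mod_cast this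
        _ = (Nat.factorial l : ℝ) * ((d T).choose l : ℝ) := by ring
    have h5d : ∑ T ∈ powersetCard r (univ : Finset V), ((d T).choose l : ℝ)
        ≤ nR ^ ((l:ℝ)) * nR ^ ((r:ℝ) - ε') := by
      have e1 : ∑ T ∈ powersetCard r (univ : Finset V), ((d T).choose l : ℝ)
          = ∑ L ∈ powersetCard l (univ : Finset V), ((lk L).card : ℝ) := by
        exact_mod_cast hB.symm
      rw [e1]
      calc ∑ L ∈ powersetCard l (univ : Finset V), ((lk L).card : ℝ)
          ≤ ((powersetCard l (univ : Finset V)).card) • (nR ^ ((r:ℝ) - ε')) :=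
            Finset.sum_le_card_nsmul _ _ _ hlink
        _ = ((powersetCard l (univ : Finset V)).card : ℝ) * nR ^ ((r:ℝ) - ε') := by
            rw [nsmul_eq_mul]
        _ ≤ nR ^ ((l:ℝ)) * nR ^ ((r:ℝ) - ε') :=
            mul_le_mul_of_nonneg_right h𝒫 (Real.rpow_nonneg hnR0.le _)
    -- the powerset-card power bound
    have p1 : (((powersetCard r (univ : Finset V)).card : ℝ))^(l-1)
        ≤ nR ^ ((r:ℝ) * ((l:ℝ) - 1)) := by
      calc (((powersetCard r (univ : Finset V)).card : ℝ))^(l-1)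
          ≤ (nR ^ ((r:ℝ)))^(l-1) := pow_le_pow_left₀ (by positivity) h𝒯 _
        _ = nR ^ ((r:ℝ) * ((l:ℝ) - 1)) := by
            rw [← Real.rpow_natCast (nR ^ ((r:ℝ))) (l-1), ← Real.rpow_mul hnR0.le]
            congr 1
            rw [Nat.cast_sub (by omega : 1 ≤ l)]
            norm_num
    have hfac : (2:ℝ)^l * (Nat.factorial l : ℝ) ≤ nR ^ (ε'/2) := by
      have := hn₁ n hnn₁
      simpa [hnRdef] using this
    have hεl : ε * (l:ℝ) = ε'/2 := by
      rw [hεdef]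
      field_simp
    have hchain : X^l ≤ (nR ^ ((r:ℝ) + 1 - ε))^l := by
      have hcardpos : (0:ℝ) < (((powersetCard r (univ : Finset V)).card : ℝ))^(l-1) :=
        pow_pos hTpos _
      have hb1 : (X/2)^l ≤ (((powersetCard r (univ : Finset V)).card : ℝ))^(l-1) *
          ((Nat.factorial l : ℝ) * (nR ^ ((l:ℝ)) * nR ^ ((r:ℝ) - ε'))) := by
        rw [← div_le_iff₀' hcardpos]
        calc (X/2)^l / (((powersetCard r (univ : Finset V)).card : ℝ))^(l-1)
            ≤ ∑ T ∈ powersetCard r (univ : Finset V), ((d T + 1 - l : ℕ) : ℝ)^l := h5b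
          _ ≤ (Nat.factorial l : ℝ) * ∑ T ∈ powersetCard r (univ : Finset V),
                ((d T).choose l : ℝ) := h5c
          _ ≤ (Nat.factorial l : ℝ) * (nR ^ ((l:ℝ)) * nR ^ ((r:ℝ) - ε')) := by
              exact mul_le_mul_of_nonneg_left h5d hfacpos.le
      have hg0 : (0:ℝ) ≤ nR ^ ((l:ℝ)) := Real.rpow_nonneg hnR0.le _
      have hg1 : (0:ℝ) ≤ nR ^ ((r:ℝ) - ε') := Real.rpow_nonneg hnR0.le _
      have hg2 : (0:ℝ) ≤ nR ^ ((r:ℝ) * ((l:ℝ) - 1)) := Real.rpow_nonneg hnR0.le _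
      calc X^l = 2^l * (X/2)^l := by
            rw [div_pow]
            field_simp
        _ ≤ 2^l * ((((powersetCard r (univ : Finset V)).card : ℝ))^(l-1) *
              ((Nat.factorial l : ℝ) * (nR ^ ((l:ℝ)) * nR ^ ((r:ℝ) - ε')))) :=
            mul_le_mul_of_nonneg_left hb1 (by positivity)
        _ ≤ 2^l * ((nR ^ ((r:ℝ) * ((l:ℝ) - 1))) *
              ((Nat.factorial l : ℝ) * (nR ^ ((l:ℝ)) * nR ^ ((r:ℝ) - ε')))) :=
            mul_le_mul_of_nonneg_left
              (mul_le_mul_of_nonneg_right p1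
                (mul_nonneg hfacpos.le (mul_nonneg hg0 hg1))) (by positivity)
        _ = (2^l * (Nat.factorial l : ℝ)) *
              (nR ^ ((r:ℝ) * ((l:ℝ) - 1)) * nR ^ ((l:ℝ)) * nR ^ ((r:ℝ) - ε')) := by ring
        _ ≤ nR ^ (ε'/2) *
              (nR ^ ((r:ℝ) * ((l:ℝ) - 1)) * nR ^ ((l:ℝ)) * nR ^ ((r:ℝ) - ε')) :=
            mul_le_mul_of_nonneg_right hfac (mul_nonneg (mul_nonneg hg2 hg0) hg1)
        _ = nR ^ (ε'/2 + ((r:ℝ) * ((l:ℝ) - 1) + (l:ℝ) + ((r:ℝ) - ε'))) := by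
            rw [Real.rpow_add hnR0, Real.rpow_add hnR0, Real.rpow_add hnR0]
        _ = (nR ^ ((r:ℝ) + 1 - ε))^l := by
            rw [← Real.rpow_natCast (nR ^ ((r:ℝ) + 1 - ε)) l, ← Real.rpow_mul hnR0.le]
            congr 1
            linear_combination hεl
    have hlow : (nR ^ ((r:ℝ) + 1 - ε))^l < X^l :=
      pow_lt_pow_left₀ hcon (Real.rpow_nonneg hnR0.le _) (by omega)
    exact absurd hchain (not_le.mpr hlow)

/-- `cliqueCount G r` is the number of `r`-element vertex subsets of `G`
inducing a complete subgraph (`r`-cliques). -/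
noncomputable def cliqueCount {V : Type} (G : SimpleGraph V) (r : ℕ) : ℕ :=
  Set.ncard {S : Finset V | G.IsNClique r S}

/-- For fixed `r, l ≥ 2` there are `ε > 0` and `n₀` such that every graph on
`n ≥ n₀` vertices with no subgraph isomorphic to the complete `r`-partite graph
`K_{l,…,l}` has at most `n ^ (r - ε)` cliques of size `r`. -/
theorem clique_count_of_no_Kpartite (r l : ℕ) (hr : 2 ≤ r) (hl : 2 ≤ l) :
    ∃ ε : ℝ, 0 < ε ∧ ∃ n₀ : ℕ,
      ∀ (V : Type) [Fintype V] (G : SimpleGraph V),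
        n₀ ≤ Fintype.card V →
        (¬ ∃ A : Fin r → Finset V,
            (∀ i, (A i).card = l) ∧
            (∀ i j, i ≠ j → Disjoint (A i) (A j)) ∧
            (∀ i j, i ≠ j → ∀ u ∈ A i, ∀ v ∈ A j, G.Adj u v)) →
        (cliqueCount G r : ℝ) ≤ (Fintype.card V : ℝ) ^ ((r : ℝ) - ε) := by
  obtain ⟨ε, hεpos, hεle, n₀, hn₀2, hbox⟩ := box_theorem l hl r
  refine ⟨ε, hεpos, n₀, ?_⟩
  intro V _ G hn hnoK
  classical
  set H : Finset (Finset V) := univ.filter (fun S => G.IsNClique r S) with hHdef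
  have hcc : cliqueCount G r = H.card := by
    rw [cliqueCount]
    have hcoe : {S : Finset V | G.IsNClique r S} = ↑H := by
      ext S; simp [hHdef]
    rw [hcoe, Set.ncard_coe_finset]
  rw [hcc]
  refine hbox V H hn (fun S hS => ?_) ?_
  · exact ((mem_filter.1 hS).2).card_eq
  · rintro ⟨A, hAcard, hAdisj, hAtrans⟩
    apply hnoK
    refine ⟨A, hAcard, hAdisj, ?_⟩
    intro i j hij u hu v hv
    have hAne : ∀ k, (A k).Nonempty := fun k => card_pos.1 (by rw [hAcard k]; omega)
    set g : Fin r → V := fun k => if k = i then u else if k = j then v else (hAne k).choose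
      with hg
    have hgmem : ∀ k, g k ∈ A k := by
      intro k
      by_cases h1 : k = i
      · subst h1; simpa [hg] using hu
      · by_cases h2 : k = j
        · subst h2; simpa [hg, h1] using hv
        · simpa [hg, h1, h2] using (hAne k).choose_spec
    have hcl := hAtrans g hgmem
    rw [hHdef, mem_filter] at hcl
    have hu' : u ∈ Finset.image g univ :=
      mem_image.2 ⟨i, mem_univ i, by simp [hg]⟩
    have hv' : v ∈ Finset.image g univ :=
      mem_image.2 ⟨j, mem_univ j, by simp [hg, if_neg (Ne.symm hij)]⟩
    have hne : u ≠ v := by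
      intro h
      subst h
      exact (Finset.disjoint_left.1 (hAdisj i j hij)) hu hv
    exact hcl.2.1 (Finset.mem_coe.mpr hu') (Finset.mem_coe.mpr hv') hne
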